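/- Let 0 < A < 1/2, set e = 2A, a = 1/(1 − e²), b = a√(1 − e²), and define g(z) = ((a+b)/2) z + ((a−b)/2) z^{−1} + a e for z ≠ 0, and h(w) = (−e w + 2)/(2w) for w ≠ 0. Let q₁(t) = h(g(e^{it})). Suppose t ∈ ℂ with Re t ∈ [−π, π) and |Im t| < log((1 + √(1 − 4A²))/(1 − √(1 − 4A²))), and s ∈ [−π, π) is real, and suppose g(e^{it}) ≠ 0 and g(e^{is}) ≠ 0. If q₁(t) = q₁(s), then t = s. -/

import Mathlib

open Complex Real

/-- The parametrization `q₁(t) = h(g(e^{it}))` of the limaçon of Pascal, obtained by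
composing the bilinear transformation `h` with the complex parametrization `g` of the
ellipse of eccentricity `e = 2A`, satisfies the injectivity condition (G) on the strip
`|Im z| < log((1 + √(1-4A²))/(1 - √(1-4A²)))`. -/
theorem limacon_optimal_param_condition_G (A : ℝ) (hA₀ : 0 < A) (hA₁ : A < 1 / 2)
    (e a b : ℝ) (he : e = 2 * A) (ha : a = 1 / (1 - e ^ 2)) (hb : b = a * Real.sqrt (1 - e ^ 2))
    (g : ℂ → ℂ) (hg : ∀ z : ℂ, g z = (((a + b) / 2 : ℝ) : ℂ) * z
        + (((a - b) / 2 : ℝ) : ℂ) * z⁻¹ + ((a * e : ℝ) : ℂ))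
    (h : ℂ → ℂ) (hh : ∀ w : ℂ, h w = (-(e : ℂ) * w + 2) / (2 * w))
    (q₁ : ℂ → ℂ) (hq₁ : ∀ z : ℂ, q₁ z = h (g (Complex.exp (Complex.I * z))))
    (t : ℂ) (ht₁ : -π ≤ t.re) (ht₂ : t.re < π)
    (ht₃ : |t.im| < Real.log ((1 + Real.sqrt (1 - 4 * A ^ 2)) / (1 - Real.sqrt (1 - 4 * A ^ 2))))
    (s : ℝ) (hs₁ : -π ≤ s) (hs₂ : s < π)
    (hgt : g (Complex.exp (Complex.I * t)) ≠ 0)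
    (hgs : g (Complex.exp (Complex.I * (s : ℂ))) ≠ 0)
    (heq : q₁ t = q₁ (s : ℂ)) :
    t = (s : ℂ) := by
  have he2 : e ^ 2 = 4 * A ^ 2 := by rw [he]; ring
  have hA2 : 4 * A ^ 2 < 1 := by nlinarith
  have h1e : (0:ℝ) < 1 - e ^ 2 := by rw [he2]; linarith
  set c : ℝ := Real.sqrt (1 - 4 * A ^ 2) with hc
  have hcsq : c ^ 2 = 1 - 4 * A ^ 2 := Real.sq_sqrt (by linarith)
  have hc0 : 0 < c := Real.sqrt_pos.mpr (by linarith)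
  have hc1 : c < 1 := by nlinarith
  have ha0 : 0 < a := by rw [ha]; positivity
  have hbc : b = a * c := by rw [hb, he2]
  have hab1 : 0 < a - b := by nlinarith
  have hab2 : 0 < a + b := by nlinarith
  -- h injectivity
  have hw : h (g (Complex.exp (Complex.I * t))) = h (g (Complex.exp (Complex.I * (s:ℂ)))) := by
    rw [← hq₁, ← hq₁]; exact heq
  rw [hh, hh] at hw
  have hw2 : g (Complex.exp (Complex.I * t)) = g (Complex.exp (Complex.I * (s:ℂ))) := by
    field_simp at hw
    linear_combination -hw / 2
  set z := Complex.exp (Complex.I * t) with hz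
  set u := Complex.exp (Complex.I * (s:ℂ)) with hu
  have hz0 : z ≠ 0 := Complex.exp_ne_zero _
  have hu0 : u ≠ 0 := Complex.exp_ne_zero _
  have key : (z - u) * ((((a+b)/2 : ℝ):ℂ) * (z * u) - (((a-b)/2 : ℝ):ℂ)) = 0 := by
    have h3 : (((a+b)/2 : ℝ):ℂ) * z + (((a-b)/2 : ℝ):ℂ) * z⁻¹
        = (((a+b)/2 : ℝ):ℂ) * u + (((a-b)/2 : ℝ):ℂ) * u⁻¹ := by
      have h4 := hw2
      rw [hg, hg] at h4
      linear_combination h4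
    have hzi : z * z⁻¹ = 1 := mul_inv_cancel₀ hz0
    have hui : u * u⁻¹ = 1 := mul_inv_cancel₀ hu0
    linear_combination z*u*h3 - (((a-b)/2 : ℝ):ℂ)*u*hzi + (((a-b)/2 : ℝ):ℂ)*z*hui
  rcases mul_eq_zero.mp key with h1 | h2
  · -- z = u
    have hzu : z = u := by linear_combination h1
    rw [hz, hu] at hzu
    rw [Complex.exp_eq_exp_iff_exists_int] at hzu
    obtain ⟨n, hn⟩ := hzu
    have ht : t = (s:ℂ) + n * (2 * π) := by
      have : Complex.I * t = Complex.I * ((s:ℂ) + n * (2*π)) := by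
        rw [hn]; ring
      exact mul_left_cancel₀ Complex.I_ne_zero this
    have ht' : t = ((s + n * (2 * π) : ℝ) : ℂ) := by rw [ht]; push_cast; ring
    have hre : t.re = s + n * (2 * π) := by rw [ht']; simp
    have hπ := Real.pi_pos
    have e1 : -π ≤ s + n * (2 * π) := hre ▸ ht₁
    have e2 : s + n * (2 * π) < π := hre ▸ ht₂
    have h1 : (-1 : ℝ) < (n : ℝ) := by nlinarith
    have h2 : ((n : ℝ)) < 1 := by nlinarith
    have hn0 : n = 0 := by
      have g1 : (-1 : ℤ) < n := by exact_mod_cast h1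
      have g2 : n < 1 := by exact_mod_cast h2
      omega
    rw [ht, hn0]; push_cast; ring
  · -- second factor zero: contradiction
    exfalso
    have habs : ‖(((a+b)/2 : ℝ):ℂ) * (z * u)‖ = ‖(((a-b)/2 : ℝ):ℂ)‖ := by
      rw [sub_eq_zero] at h2; rw [h2]
    rw [norm_mul, norm_mul] at habs
    have hzabs : ‖z‖ = Real.exp (-t.im) := by
      rw [hz, Complex.norm_exp]
      congr 1
      simp [Complex.mul_re]
    have huabs : ‖u‖ = 1 := by
      rw [hu, Complex.norm_exp]
      simp [Complex.mul_re]
    rw [hzabs, huabs, Complex.norm_real, Complex.norm_real, Real.norm_eq_abs, Real.norm_eq_abs] at habs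
    rw [abs_of_pos (by linarith : (0:ℝ) < (a+b)/2), abs_of_pos (by linarith : (0:ℝ) < (a-b)/2)] at habs
    -- habs : (a+b)/2 * (exp(-t.im) * 1) = (a-b)/2
    have hlog : Real.log ((1 + c) / (1 - c)) = Real.log ((1+c)/(1-c)) := rfl
    have hX : (0:ℝ) < (1+c)/(1-c) := div_pos (by linarith) (by linarith)
    have hexp : Real.exp (-t.im) > (1 - c) / (1 + c) := by
      have h1 : -t.im > -Real.log ((1+c)/(1-c)) := by
        have := abs_lt.mp ht₃
        linarith [this.2]
      calc Real.exp (-t.im) > Real.exp (-Real.log ((1+c)/(1-c))) := Real.exp_lt_exp.mpr h1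
        _ = (1 - c) / (1 + c) := by
            rw [Real.exp_neg, Real.exp_log hX, inv_div]
    have hfrac : (a - b) / (a + b) = (1 - c) / (1 + c) := by
      rw [hbc]; field_simp
    have : Real.exp (-t.im) = (a - b) / (a + b) := by
      field_simp at habs ⊢
      linarith
    rw [this, hfrac] at hexp
    linarith
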